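/- Let G be a pro-p group with θ : G → 1 + pℤₚ a continuous homomorphism, where p is odd (or more generally the image of θ is torsion free). Then all generators h^{−θ(g)}·g·h·g⁻¹ (g ∈ G, h ∈ ker θ) of K(G,θ) lie in the Frattini subgroup Gᵖ[G,G]; consequently K(G,θ) ⊆ Frat(G). -/
import Mathlib


theorem stmt13 (p : ℕ) [Fact p.Prime] {G : Type*} [Group G] (θ : G →* ℤ_[p]ˣ)
    (hθ : ∀ g : G, ∃ y : ℤ_[p], (θ g : ℤ_[p]) = 1 + (p : ℤ_[p]) * y) :
    ∀ g h : G, θ h = 1 → ∀ n : ℤ, ((θ g : ℤ_[p])) = (n : ℤ_[p]) →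
      h ^ (-n) * g * h * g⁻¹ ∈
        Subgroup.closure
          ({x : G | ∃ y : G, x = y ^ p} ∪ {x : G | ∃ a b : G, x = a⁻¹ * b⁻¹ * a * b}) := by
  intro g h hh n hn
  obtain ⟨y, hy⟩ := hθ g
  have hdvd : (p : ℤ) ∣ (n - 1) := by
    rw [← PadicInt.norm_int_lt_one_iff_dvd]
    have hcast : ((n - 1 : ℤ) : ℤ_[p]) = (p : ℤ_[p]) * y := by
      push_cast
      rw [← hn, hy]; ring
    rw [hcast]
    have h1 : ‖(p : ℤ_[p])‖ < 1 := by
      rw [PadicInt.norm_p]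
      have hp := (Fact.out : p.Prime).one_lt
      rw [inv_lt_one_iff₀]
      right
      exact_mod_cast hp
    calc ‖(p : ℤ_[p]) * y‖ ≤ ‖(p : ℤ_[p])‖ * ‖y‖ := norm_mul_le _ _
      _ ≤ ‖(p : ℤ_[p])‖ * 1 :=
          mul_le_mul_of_nonneg_left (PadicInt.norm_le_one y) (norm_nonneg _)
      _ = ‖(p : ℤ_[p])‖ := mul_one _
      _ < 1 := h1
  obtain ⟨m, hm⟩ := hdvd
  have hpow : h ^ (-n) = (h ^ (-m)) ^ p * h⁻¹ := by
    rw [← zpow_natCast (h ^ (-m)) p, ← zpow_mul, ← zpow_neg_one, ← zpow_add]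
    congr 1
    linear_combination -hm
  have key : h ^ (-n) * g * h * g⁻¹ = (h ^ (-m)) ^ p * (h⁻¹ * (g⁻¹)⁻¹ * h * g⁻¹) := by
    rw [hpow]; group
  rw [key]
  exact Subgroup.mul_mem _
    (Subgroup.subset_closure (Or.inl ⟨h ^ (-m), rfl⟩))
    (Subgroup.subset_closure (Or.inr ⟨h, g⁻¹, rfl⟩))
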